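/- For every n = 2m with m a positive integer, there exists a simple 2-2-AND-BN on n nodes for which the size of the minimum control node set is n (i.e., every node must be a control node). -/
import Mathlib


namespace BN

variable {n : ℕ}

/-- The Boolean function `f` depends on input `j`. -/
def Depends (f : (Fin n → Bool) → Bool) (j : Fin n) : Prop :=
  ∃ x : Fin n → Bool, f (Function.update x j (!(x j))) ≠ f x

/-- The set of incoming nodes of node `i` (Γ⁻). -/
def inSet (F : Fin n → (Fin n → Bool) → Bool) (i : Fin n) : Set (Fin n) :=
  {j | Depends (F i) j}

/-- The set of outgoing nodes of node `i` (Γ⁺). -/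
def outSet (F : Fin n → (Fin n → Bool) → Bool) (i : Fin n) : Set (Fin n) :=
  {j | Depends (F j) i}

/-- The controlled trajectory: nodes in `U` get an xor-control signal. -/
def traj (F : Fin n → (Fin n → Bool) → Bool) (U : Finset (Fin n))
    (u : ℕ → Fin n → Bool) (x0 : Fin n → Bool) : ℕ → Fin n → Bool
  | 0 => x0
  | t + 1 => fun i =>
      if i ∈ U then Bool.xor (u t i) (F i (traj F U u x0 t))
      else F i (traj F U u x0 t)

/-- `U` is a control node set: any initial state can be driven to any target state. -/
def IsControlSet (F : Fin n → (Fin n → Bool) → Bool) (U : Finset (Fin n)) : Prop :=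
  ∀ x0 xT : Fin n → Bool, ∃ t : ℕ, 1 ≤ t ∧ ∃ u : ℕ → Fin n → Bool, traj F U u x0 t = xT

/-- AND of the inputs in `S` (no negations). -/
def andFun (S : Finset (Fin n)) (x : Fin n → Bool) : Bool :=
  decide (∀ j ∈ S, x j = true)

/-- `f` is the conjunction of `k` distinct inputs (no negations). -/
def IsSimpleKAnd (k : ℕ) (f : (Fin n → Bool) → Bool) : Prop :=
  ∃ S : Finset (Fin n), S.card = k ∧ f = andFun S

/-- A simple `k`-`k`-AND-BN: each function is a `k`-input AND (no negations) and
every node has indegree `k` and outdegree `k`. -/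
def IsSimpleKKAndBN (k : ℕ) (F : Fin n → (Fin n → Bool) → Bool) : Prop :=
  (∀ i, IsSimpleKAnd k (F i)) ∧ ∀ i, (inSet F i).ncard = k ∧ (outSet F i).ncard = k

/-- For every `n = 2m` with `m ≥ 1`, there exists a simple 2-2-AND-BN on
`n` nodes whose minimum control node set has size `n` (all nodes must be controlled). -/
def pv (k : ℕ) : ℕ := if k % 2 = 0 then k + 1 else k - 1

lemma pv_pv (k : ℕ) : pv (pv k) = k := by unfold pv; split_ifs <;> omega

def pmate {m : ℕ} (i : Fin (2 * m)) : Fin (2 * m) :=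
  ⟨pv i.val, by have := i.isLt; unfold pv; split_ifs <;> omega⟩

lemma pmate_pmate {m : ℕ} (i : Fin (2 * m)) : pmate (pmate i) = i :=
  Fin.ext (pv_pv i.val)

lemma pmate_ne {m : ℕ} (i : Fin (2 * m)) : pmate i ≠ i := by
  intro h
  have h' := congrArg Fin.val h
  simp only [pmate, pv] at h'
  split_ifs at h' <;> omega

lemma andFun_update_of_notMem (S : Finset (Fin n)) (j : Fin n) (hj : j ∉ S)
    (x : Fin n → Bool) (b : Bool) : andFun S (Function.update x j b) = andFun S x := by
  simp only [andFun, decide_eq_decide]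
  constructor <;> intro h k hk <;>
    have hkj : k ≠ j := fun e => hj (e ▸ hk)
  · have := h k hk; rwa [Function.update_of_ne hkj] at this
  · rw [Function.update_of_ne hkj]; exact h k hk

lemma depends_andFun (S : Finset (Fin n)) (j : Fin n) :
    Depends (andFun S) j ↔ j ∈ S := by
  constructor
  · rintro ⟨x, hx⟩
    by_contra hj
    exact hx (andFun_update_of_notMem S j hj x _)
  · intro hj
    refine ⟨fun _ => true, ?_⟩
    have h1 : andFun S (fun _ => true) = true := by simp [andFun]
    have h2 : andFun S (Function.update (fun _ => true) j (!(true : Bool))) = false := by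
      rw [andFun, decide_eq_false_iff_not]
      intro h
      have := h j hj
      simp at this
    rw [h1, h2]; simp

theorem stmt9 (m : ℕ) (hm : 0 < m) :
    ∃ F : Fin (2 * m) → (Fin (2 * m) → Bool) → Bool, IsSimpleKKAndBN 2 F ∧
      (∃ U : Finset (Fin (2 * m)), IsControlSet F U ∧ U.card = 2 * m) ∧
      ∀ U : Finset (Fin (2 * m)), IsControlSet F U → 2 * m ≤ U.card := by
  set F : Fin (2 * m) → (Fin (2 * m) → Bool) → Bool :=
    fun i => andFun {i, pmate i} with hF
  have hne : ∀ i : Fin (2 * m), i ≠ pmate i := fun i => (pmate_ne i).symm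
  have hdep : ∀ i j : Fin (2 * m), Depends (F i) j ↔ (j = i ∨ j = pmate i) := by
    intro i j
    rw [hF, depends_andFun]
    simp [Finset.mem_insert]
  refine ⟨F, ⟨?_, ?_⟩, ⟨Finset.univ, ?_, ?_⟩, ?_⟩
  · intro i
    exact ⟨{i, pmate i}, Finset.card_pair (hne i), rfl⟩
  · intro i
    constructor
    · have : inSet F i = ({i, pmate i} : Set (Fin (2 * m))) := by
        ext j; simp [inSet, hdep]
      rw [this, Set.ncard_pair (hne i)]
    · have : outSet F i = ({i, pmate i} : Set (Fin (2 * m))) := by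
        ext j
        simp only [outSet, Set.mem_setOf_eq, hdep, Set.mem_insert_iff,
          Set.mem_singleton_iff]
        constructor
        · rintro (rfl | h)
          · exact Or.inl rfl
          · right; rw [h, pmate_pmate]
        · rintro (rfl | rfl)
          · exact Or.inl rfl
          · exact Or.inr (pmate_pmate i).symm
      rw [this, Set.ncard_pair (hne i)]
  · -- univ is a control set
    intro x0 xT
    refine ⟨1, le_refl 1, fun _ i => Bool.xor (xT i) (F i x0), ?_⟩
    funext i
    simp only [traj, Finset.mem_univ, if_true]
    cases h : F i x0 <;> cases xT i <;> rfl
  · simp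
  · -- lower bound
    intro U hU
    have hsub : Finset.univ ⊆ U := by
      intro i _
      by_contra hi
      obtain ⟨t, ht, u, hu⟩ := hU (fun _ => false) (fun _ => true)
      have key : ∀ s, traj F U u (fun _ => false) s i = false := by
        intro s
        induction s with
        | zero => rfl
        | succ s ih =>
          simp only [traj, if_neg hi, hF, andFun]
          rw [decide_eq_false_iff_not]
          intro h
          have := h i (by simp)
          rw [ih] at this
          exact Bool.false_ne_true this
      have := congrFun hu i
      rw [key t] at this
      exact Bool.false_ne_true this
    calc 2 * m = (Finset.univ : Finset (Fin (2 * m))).card := by simp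
      _ ≤ U.card := Finset.card_le_card hsub

end BN
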